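/- Let p_n be the monic polynomials defined by p_{n+1}(x) = (x − b_n)p_n(x) − λ_n p_{n−1}(x), p_0 = 1, p_{−1} = 0, with b_n = q^{n+1}[n+1]_q + q^{n−1}[n]_q and λ_n = q^{2n−1}([n]_q)^2, for fixed 0 < q < 1. Let L be the linear functional on polynomials given by L(f) = (1−q) f(0) + Σ_{i≥1} q^i (q;q)_∞/(q;q)_{i−1} · f(q^{i−1}/(1−q)). Then L(p_n) = 0 for all n ≥ 1, and consequently L(p_m p_n) = 0 for all m ≠ n. -/

import Mathlib

open Finset

namespace SS

variable {n : ℕ}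

/-- `descB σ j = true` iff there is a descent between positions `j` and `j+1`
in the word `σ(1)σ(2)⋯σ(n)`. -/
def descB (σ : Equiv.Perm (Fin n)) (j : ℕ) : Bool :=
  if h : j + 1 < n then decide ((σ ⟨j+1, h⟩) < σ ⟨j, Nat.lt_of_succ_lt h⟩) else false

/-- The index of the maximal increasing run containing position `p`. -/
def runIdx (σ : Equiv.Perm (Fin n)) (p : ℕ) : ℕ :=
  ((Finset.range p).filter (fun j => descB σ j = true)).card

/-- The index of the run containing the value `v`. -/
def runOf (σ : Equiv.Perm (Fin n)) (v : Fin n) : ℕ := runIdx σ (σ.symm v).val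

/-- The number of maximal increasing runs of `σ`. -/
def runCount (σ : Equiv.Perm (Fin n)) : ℕ :=
  if n = 0 then 0 else runIdx σ n + 1

/-- `lsgAt σ v` : number of runs strictly to the left of (the run of) `v`
containing both an element smaller than `v` and an element greater than `v`. -/
def lsgAt (σ : Equiv.Perm (Fin n)) (v : Fin n) : ℕ :=
  ((Finset.range (runCount σ)).filter (fun r => r < runOf σ v ∧
      (∃ a : Fin n, runOf σ a = r ∧ a < v) ∧ (∃ b : Fin n, runOf σ b = r ∧ v < b))).card

/-- `rsgAt σ v` : number of runs strictly to the right of `v`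
containing both an element smaller than `v` and an element greater than `v`. -/
def rsgAt (σ : Equiv.Perm (Fin n)) (v : Fin n) : ℕ :=
  ((Finset.range (runCount σ)).filter (fun r => runOf σ v < r ∧
      (∃ a : Fin n, runOf σ a = r ∧ a < v) ∧ (∃ b : Fin n, runOf σ b = r ∧ v < b))).card

def lsg (σ : Equiv.Perm (Fin n)) : ℕ := ∑ v : Fin n, lsgAt σ v
def rsg (σ : Equiv.Perm (Fin n)) : ℕ := ∑ v : Fin n, rsgAt σ v

/-- position `p` begins a maximal increasing run. -/
def startsB (σ : Equiv.Perm (Fin n)) (p : ℕ) : Bool := p == 0 || descB σ (p - 1)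

/-- position `p` ends a maximal increasing run. -/
def endsB (σ : Equiv.Perm (Fin n)) (p : ℕ) : Bool := p + 1 == n || descB σ p

def openerB (σ : Equiv.Perm (Fin n)) (v : Fin n) : Bool :=
  startsB σ (σ.symm v).val && !endsB σ (σ.symm v).val
def closerB (σ : Equiv.Perm (Fin n)) (v : Fin n) : Bool :=
  endsB σ (σ.symm v).val && !startsB σ (σ.symm v).val
def singB (σ : Equiv.Perm (Fin n)) (v : Fin n) : Bool :=
  startsB σ (σ.symm v).val && endsB σ (σ.symm v).val
def contB (σ : Equiv.Perm (Fin n)) (v : Fin n) : Bool :=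
  !startsB σ (σ.symm v).val && !endsB σ (σ.symm v).val

def lsgOp (σ : Equiv.Perm (Fin n)) : ℕ :=
  ∑ v ∈ univ.filter (fun v : Fin n => openerB σ v = true), lsgAt σ v
def rsgOp (σ : Equiv.Perm (Fin n)) : ℕ :=
  ∑ v ∈ univ.filter (fun v : Fin n => openerB σ v = true), rsgAt σ v
def lsgClos (σ : Equiv.Perm (Fin n)) : ℕ :=
  ∑ v ∈ univ.filter (fun v : Fin n => closerB σ v = true), lsgAt σ v
def rsgClos (σ : Equiv.Perm (Fin n)) : ℕ :=
  ∑ v ∈ univ.filter (fun v : Fin n => closerB σ v = true), rsgAt σ v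
def lsgSing (σ : Equiv.Perm (Fin n)) : ℕ :=
  ∑ v ∈ univ.filter (fun v : Fin n => singB σ v = true), lsgAt σ v
def rsgSing (σ : Equiv.Perm (Fin n)) : ℕ :=
  ∑ v ∈ univ.filter (fun v : Fin n => singB σ v = true), rsgAt σ v
def lsgCont (σ : Equiv.Perm (Fin n)) : ℕ :=
  ∑ v ∈ univ.filter (fun v : Fin n => contB σ v = true), lsgAt σ v
def rsgCont (σ : Equiv.Perm (Fin n)) : ℕ :=
  ∑ v ∈ univ.filter (fun v : Fin n => contB σ v = true), rsgAt σ v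

/-- `[m]_q = 1 + q + ⋯ + q^{m-1}`. -/
def qint {R : Type*} [CommRing R] (q : R) (m : ℕ) : R := ∑ i ∈ Finset.range m, q ^ i

/-- `[n]_q! = [1]_q [2]_q ⋯ [n]_q`. -/
def qfact {R : Type*} [CommRing R] (q : R) (n : ℕ) : R := ∏ m ∈ Finset.range n, qint q (m+1)

/-- `moment b lam l h` : sum of the weights of all weighted Motzkin paths with `l` steps
starting at height `h` and ending at height `0`, where up steps have weight `1`,
a level step at height `k` has weight `b k`, and a down step from height `k`
has weight `lam k`.  The `n`th moment of the corresponding monic orthogonal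
polynomial sequence is `moment b lam n 0`. -/
def moment {R : Type*} [CommRing R] (b lam : ℕ → R) : ℕ → ℕ → R
  | 0, h => if h = 0 then 1 else 0
  | (l+1), h => moment b lam l (h+1) + b h * moment b lam l h +
      (if h = 0 then 0 else lam h * moment b lam l (h-1))

end SS

namespace SS

/-- `(q;q)_k = ∏_{j=1}^{k} (1 - q^j)`. -/
noncomputable def poch (q : ℝ) (k : ℕ) : ℝ := ∏ j ∈ Finset.range k, (1 - q ^ (j + 1))

/-- `(q;q)_∞ = ∏_{j≥1} (1 - q^j)`. -/
noncomputable def pochInf (q : ℝ) : ℝ := ∏' j : ℕ, (1 - q ^ (j + 1))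

end SS
namespace SS

/-- Monic orthogonal polynomial sequence with recurrence
`p_{n+1} = (X - b_n) p_n - λ_n p_{n-1}`, `p_0 = 1`. -/
noncomputable def ops (b lam : ℕ → ℝ) : ℕ → Polynomial ℝ
  | 0 => 1
  | 1 => Polynomial.X - Polynomial.C (b 0)
  | (n+2) => (Polynomial.X - Polynomial.C (b (n+1))) * ops b lam (n+1)
      - Polynomial.C (lam (n+1)) * ops b lam n

/-- The linear functional `L f = (1-q) f(0) + ∑_{i≥1} q^i (q;q)_∞/(q;q)_{i-1} · f(q^{i-1}/(1-q))`. -/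
noncomputable def Lfun (q : ℝ) (f : Polynomial ℝ) : ℝ :=
  (1 - q) * f.eval 0 + ∑' i : ℕ, (q ^ (i + 1) * pochInf q / poch q i) * f.eval (q ^ i / (1 - q))

end SS

set_option maxHeartbeats 1000000

namespace SSP
open Finset Filter Topology Polynomial SS

variable {q : ℝ}

lemma factor_pos (h0 : 0 < q) (h1 : q < 1) (j : ℕ) : (0:ℝ) < 1 - q ^ (j+1) := by
  have : q ^ (j+1) < 1 := pow_lt_one₀ h0.le h1 (Nat.succ_ne_zero j)
  linarith

lemma factor_le_one (h0 : 0 < q) (j : ℕ) : (1 : ℝ) - q ^ (j+1) ≤ 1 := by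
  have : 0 < q ^ (j+1) := pow_pos h0 _
  linarith

lemma poch_pos (h0 : 0 < q) (h1 : q < 1) (k : ℕ) : 0 < poch q k :=
  Finset.prod_pos fun j _ => factor_pos h0 h1 j

lemma poch_succ (k : ℕ) : poch q (k+1) = poch q k * (1 - q ^ (k+1)) := by
  simp [poch, Finset.prod_range_succ]

lemma poch_le_one (h0 : 0 < q) (h1 : q < 1) (k : ℕ) : poch q k ≤ 1 := by
  induction k with
  | zero => simp [poch]
  | succ n ih =>
    rw [poch_succ]
    calc poch q n * (1 - q ^ (n+1)) ≤ 1 * 1 :=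
      mul_le_mul ih (factor_le_one h0 n) (factor_pos h0 h1 n).le one_pos.le
    _ = 1 := one_mul 1

lemma summable_log (h0 : 0 < q) (h1 : q < 1) :
    Summable (fun j : ℕ => Real.log (1 - q ^ (j+1))) := by
  have hq1 : (0:ℝ) < 1 - q := by linarith
  have hb : ∀ j : ℕ, |Real.log (1 - q ^ (j+1))| ≤ (1/(1-q)) * q ^ j := by
    intro j
    have hfp := factor_pos h0 h1 j
    have hpw : q ^ (j+1) ≤ q ^ j := pow_le_pow_of_le_one h0.le h1.le (by omega)
    have hpw1 : q ^ (j+1) ≤ q := by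
      have := pow_le_pow_of_le_one h0.le h1.le (show 1 ≤ j+1 by omega)
      simpa using this
    have hlog_le : Real.log (1 - q ^ (j+1)) ≤ 0 := by
      apply Real.log_nonpos (by linarith)
      nlinarith [pow_pos h0 (j+1)]
    have h2 : -Real.log (1 - q ^ (j+1)) = Real.log ((1 - q ^ (j+1))⁻¹) := (Real.log_inv _).symm
    have h3 : Real.log ((1 - q ^ (j+1))⁻¹) ≤ (1 - q ^ (j+1))⁻¹ - 1 :=
      Real.log_le_sub_one_of_pos (by positivity)
    have h4 : (1 - q ^ (j+1))⁻¹ - 1 = q ^ (j+1) / (1 - q ^ (j+1)) := by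
      field_simp
      ring
    have h5 : q ^ (j+1) / (1 - q ^ (j+1)) ≤ q ^ j / (1 - q) :=
      div_le_div₀ (pow_pos h0 j).le hpw hq1 (by linarith)
    rw [abs_of_nonpos hlog_le]
    calc -Real.log (1 - q ^ (j+1)) ≤ (1 - q ^ (j+1))⁻¹ - 1 := by rw [h2]; exact h3
    _ = q ^ (j+1) / (1 - q ^ (j+1)) := h4
    _ ≤ q ^ j / (1 - q) := h5
    _ = (1/(1-q)) * q ^ j := by ring
  have hg : Summable (fun j : ℕ => (1/(1-q)) * q ^ j) :=
    (summable_geometric_of_lt_one h0.le h1).mul_left _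
  have habs : Summable (fun j : ℕ => |Real.log (1 - q ^ (j+1))|) :=
    Summable.of_nonneg_of_le (fun j => abs_nonneg _) hb hg
  exact habs.of_abs

lemma hasProd_poch (h0 : 0 < q) (h1 : q < 1) :
    HasProd (fun j : ℕ => 1 - q ^ (j+1)) (pochInf q) := by
  have := (Real.multipliable_of_summable_log (fun j => factor_pos h0 h1 j) (summable_log h0 h1)).hasProd
  simpa [pochInf] using this

lemma pochInf_pos (h0 : 0 < q) (h1 : q < 1) : 0 < pochInf q := by
  have := Real.rexp_tsum_eq_tprod (fun j => factor_pos h0 h1 j) (summable_log h0 h1)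
  have h2 := this
  have : pochInf q = Real.exp (∑' (n : ℕ), Real.log (1 - q ^ (n+1))) := by
    rw [pochInf]; rw [← h2]
  rw [this]; exact Real.exp_pos _

lemma tendsto_poch (h0 : 0 < q) (h1 : q < 1) :
    Tendsto (fun n => poch q n) atTop (𝓝 (pochInf q)) := by
  have := (hasProd_poch h0 h1).tendsto_prod_nat
  exact this

lemma pochInf_le_poch (h0 : 0 < q) (h1 : q < 1) (k : ℕ) : pochInf q ≤ poch q k := by
  apply le_of_tendsto (tendsto_poch h0 h1)
  rw [eventually_atTop]
  refine ⟨k, fun n hn => ?_⟩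
  have : ∀ m, poch q (k + m) ≤ poch q k := by
    intro m; induction m with
    | zero => simp
    | succ j ih =>
      have := poch_succ (q := q) (k + j)
      rw [show k + (j+1) = (k+j)+1 from rfl, poch_succ]
      calc poch q (k+j) * (1 - q ^ (k+j+1)) ≤ poch q (k+j) * 1 := by
            have := factor_le_one h0 (k+j)
            have hp := poch_pos h0 h1 (k+j)
            nlinarith
      _ = poch q (k+j) := mul_one _
      _ ≤ poch q k := ih
  have h2 := this (n - k)
  rwa [Nat.add_sub_cancel' hn] at h2

/-- tail ratio -/
noncomputable def T (q : ℝ) (i : ℕ) : ℝ := pochInf q / poch q i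

lemma T_pos (h0 : 0 < q) (h1 : q < 1) (i : ℕ) : 0 < T q i :=
  div_pos (pochInf_pos h0 h1) (poch_pos h0 h1 i)

lemma T_le_one (h0 : 0 < q) (h1 : q < 1) (i : ℕ) : T q i ≤ 1 := by
  rw [T, div_le_one (poch_pos h0 h1 i)]
  exact pochInf_le_poch h0 h1 i

lemma T_succ (h0 : 0 < q) (h1 : q < 1) (i : ℕ) : T q i = (1 - q ^ (i+1)) * T q (i+1) := by
  have hp := (poch_pos h0 h1 i).ne'
  have hp1 := (poch_pos h0 h1 (i+1)).ne'
  have hw := (factor_pos h0 h1 i).ne'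
  rw [T, T, poch_succ, mul_div_assoc']
  rw [mul_comm (poch q i) (1 - q^(i+1))]
  rw [mul_div_mul_left _ _ hw]

lemma tendsto_T (h0 : 0 < q) (h1 : q < 1) : Tendsto (T q) atTop (𝓝 1) := by
  have h2 : Tendsto (fun i => pochInf q / poch q i) atTop (𝓝 (pochInf q / pochInf q)) :=
    Tendsto.div tendsto_const_nhds (tendsto_poch h0 h1) (pochInf_pos h0 h1).ne'
  rw [div_self (pochInf_pos h0 h1).ne'] at h2
  exact h2

lemma summable_qT (h0 : 0 < q) (h1 : q < 1) (m : ℕ) :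
    Summable (fun i : ℕ => q ^ (i*(m+1)) * T q i) := by
  apply Summable.of_nonneg_of_le
    (fun i => mul_nonneg (pow_pos h0 _).le (T_pos h0 h1 i).le)
    (fun i => ?_) (summable_geometric_of_lt_one h0.le h1)
  calc q ^ (i*(m+1)) * T q i ≤ q ^ (i*(m+1)) * 1 := by
        have := T_le_one h0 h1 i; have := T_pos h0 h1 i
        nlinarith [pow_pos h0 (i*(m+1))]
  _ = q ^ (i*(m+1)) := mul_one _
  _ ≤ q ^ i := pow_le_pow_of_le_one h0.le h1.le (Nat.le_mul_of_pos_right i (by omega))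

noncomputable def G (q : ℝ) (m : ℕ) : ℝ := ∑' i : ℕ, q ^ (i*(m+1)) * T q i

lemma G_zero (h0 : 0 < q) (h1 : q < 1) : G q 0 = 1 := by
  have hpartial : ∀ N : ℕ, ∑ i ∈ Finset.range (N+1), q ^ (i*(0+1)) * T q i = T q N := by
    intro N; induction N with
    | zero => norm_num [Finset.sum_range_one]
    | succ n ih =>
      rw [Finset.sum_range_succ, ih, T_succ h0 h1 n]
      ring
  have hsum : Tendsto (fun N => ∑ i ∈ Finset.range N, q ^ (i*(0+1)) * T q i) atTop
      (𝓝 (G q 0)) := (summable_qT h0 h1 0).hasSum.tendsto_sum_nat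
  have hsum2 : Tendsto (fun N : ℕ => ∑ i ∈ Finset.range (N+1), q ^ (i*(0+1)) * T q i) atTop
      (𝓝 (G q 0)) := hsum.comp (tendsto_add_atTop_nat 1)
  have hsum3 : Tendsto (T q) atTop (𝓝 (G q 0)) := by
    apply hsum2.congr
    intro N; exact hpartial N
  exact tendsto_nhds_unique hsum3 (tendsto_T h0 h1)

lemma G_succ (h0 : 0 < q) (h1 : q < 1) (m : ℕ) : G q (m+1) = (1 - q ^ (m+1)) * G q m := by
  have s1 := summable_qT h0 h1 m
  have s2 := summable_qT h0 h1 (m+1)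
  have s1' : Summable (fun i : ℕ => q ^ ((i+1)*(m+1)) * T q (i+1)) :=
    ((summable_nat_add_iff 1).2 s1)
  have s2' : Summable (fun i : ℕ => q ^ ((i+1)*(m+2)) * T q (i+1)) :=
    ((summable_nat_add_iff 1).2 s2)
  have key : q ^ (m+1) * G q m = G q m - G q (m+1) := by
    have e1 : ∀ i : ℕ, q ^ (m+1) * (q ^ (i*(m+1)) * T q i)
        = q ^ ((i+1)*(m+1)) * T q (i+1) - q ^ ((i+1)*(m+2)) * T q (i+1) := by
      intro i
      rw [T_succ h0 h1 i]
      ring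
    have e2 : G q m = T q 0 + ∑' i : ℕ, q ^ ((i+1)*(m+1)) * T q (i+1) := by
      have := Summable.tsum_eq_zero_add s1
      simpa [G] using this
    have e3 : G q (m+1) = T q 0 + ∑' i : ℕ, q ^ ((i+1)*(m+2)) * T q (i+1) := by
      have := Summable.tsum_eq_zero_add s2
      simpa [G] using this
    calc q ^ (m+1) * G q m = ∑' i : ℕ, q ^ (m+1) * (q ^ (i*(m+1)) * T q i) := by
          rw [G, tsum_mul_left]
    _ = ∑' i : ℕ, (q ^ ((i+1)*(m+1)) * T q (i+1) - q ^ ((i+1)*(m+2)) * T q (i+1)) := by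
          exact tsum_congr e1
    _ = (∑' i : ℕ, q ^ ((i+1)*(m+1)) * T q (i+1)) - ∑' i : ℕ, q ^ ((i+1)*(m+2)) * T q (i+1) :=
          Summable.tsum_sub s1' s2'
    _ = G q m - G q (m+1) := by rw [e2, e3]; ring
  linarith [key]

lemma G_eq (h0 : 0 < q) (h1 : q < 1) (m : ℕ) : G q m = poch q m := by
  induction m with
  | zero => simpa [poch] using G_zero h0 h1
  | succ n ih => rw [G_succ h0 h1 n, ih, poch_succ]; ring

lemma qint_succ_mul (m : ℕ) : (1 - q) * qint q (m+1) = 1 - q ^ (m+1) := by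
  have := geom_sum_mul (x := q) (n := m+1)
  have h2 : qint q (m+1) * (q - 1) = q ^ (m+1) - 1 := this
  nlinarith [h2]

lemma poch_eq_qfact (m : ℕ) : poch q m = (1-q) ^ m * qfact q m := by
  induction m with
  | zero => simp [poch, qfact]
  | succ n ih =>
    have hq : qfact q (n+1) = qfact q n * qint q (n+1) := Finset.prod_range_succ _ _
    rw [poch_succ, ih, hq, ← qint_succ_mul]
    ring

lemma w_eq (h0 : 0 < q) (h1 : q < 1) (i : ℕ) :
    q ^ (i + 1) * pochInf q / poch q i = q ^ (i+1) * T q i := by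
  rw [T, mul_div_assoc]

lemma term_eq (h0 : 0 < q) (h1 : q < 1) (i m : ℕ) (a : ℝ) :
    (q ^ (i + 1) * pochInf q / poch q i) * (a * (q ^ i / (1 - q)) ^ m)
      = (a * q / (1-q)^m) * (q ^ (i*(m+1)) * T q i) := by
  rw [w_eq h0 h1 i, div_pow, ← pow_mul]
  ring

lemma summable_eval (h0 : 0 < q) (h1 : q < 1) (f : Polynomial ℝ) :
    Summable (fun i : ℕ => (q ^ (i + 1) * pochInf q / poch q i) * f.eval (q ^ i / (1 - q))) := by
  induction f using Polynomial.induction_on' with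
  | add r s hr hs =>
    apply Summable.congr (hr.add hs)
    intro i
    simp [Polynomial.eval_add]; ring
  | monomial n a =>
    apply Summable.congr (((summable_qT h0 h1 n).mul_left (a * q / (1-q)^n)))
    intro i
    rw [Polynomial.eval_monomial]
    exact (term_eq h0 h1 i n a).symm

lemma Lfun_monomial (h0 : 0 < q) (h1 : q < 1) (m : ℕ) (a : ℝ) :
    Lfun q (Polynomial.monomial m a) = a * ((if m = 0 then 1-q else 0) + q * qfact q m) := by
  rw [Lfun]
  have e0 : (Polynomial.monomial m a).eval 0 = a * (if m = 0 then 1 else 0) := by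
    rw [Polynomial.eval_monomial, zero_pow_eq]
  have e1 : ∀ i : ℕ, (q ^ (i + 1) * pochInf q / poch q i)
      * (Polynomial.monomial m a).eval (q ^ i / (1 - q))
      = (a * q / (1-q)^m) * (q ^ (i*(m+1)) * T q i) := by
    intro i
    rw [Polynomial.eval_monomial]
    exact term_eq h0 h1 i m a
  rw [tsum_congr e1, tsum_mul_left, ← G, G_eq h0 h1 m, poch_eq_qfact, e0]
  have hq1 : (0:ℝ) < 1 - q := by linarith
  have hne : (1-q)^m ≠ 0 := pow_ne_zero m hq1.ne'
  by_cases hm : m = 0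
  · subst hm; simp; ring
  · simp only [hm, if_false]
    field_simp
    ring

lemma Lfun_add (h0 : 0 < q) (h1 : q < 1) (f g : Polynomial ℝ) :
    Lfun q (f + g) = Lfun q f + Lfun q g := by
  rw [Lfun, Lfun, Lfun]
  have e1 : ∀ i : ℕ, (q ^ (i + 1) * pochInf q / poch q i) * (f+g).eval (q ^ i / (1 - q))
      = (q ^ (i + 1) * pochInf q / poch q i) * f.eval (q ^ i / (1 - q))
        + (q ^ (i + 1) * pochInf q / poch q i) * g.eval (q ^ i / (1 - q)) := by
    intro i; rw [Polynomial.eval_add]; ring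
  rw [tsum_congr e1, Summable.tsum_add (summable_eval h0 h1 f) (summable_eval h0 h1 g)]
  simp [Polynomial.eval_add]
  ring

lemma Lfun_Cmul (h0 : 0 < q) (h1 : q < 1) (a : ℝ) (f : Polynomial ℝ) :
    Lfun q (Polynomial.C a * f) = a * Lfun q f := by
  rw [Lfun, Lfun]
  have e1 : ∀ i : ℕ, (q ^ (i + 1) * pochInf q / poch q i)
      * (Polynomial.C a * f).eval (q ^ i / (1 - q))
      = a * ((q ^ (i + 1) * pochInf q / poch q i) * f.eval (q ^ i / (1 - q))) := by
    intro i; rw [Polynomial.eval_mul, Polynomial.eval_C]; ring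
  rw [tsum_congr e1, tsum_mul_left]
  simp [Polynomial.eval_mul]
  ring

lemma Lfun_zero (h0 : 0 < q) (h1 : q < 1) : Lfun q 0 = 0 := by
  simp [Lfun]

lemma Lfun_sum (h0 : 0 < q) (h1 : q < 1) {ι : Type*} (s : Finset ι) (g : ι → Polynomial ℝ) :
    Lfun q (∑ k ∈ s, g k) = ∑ k ∈ s, Lfun q (g k) := by
  induction s using Finset.cons_induction_on with
  | empty => simpa using Lfun_zero h0 h1
  | cons _ _ hx ih =>
    rw [Finset.sum_cons, Finset.sum_cons, Lfun_add h0 h1, ih]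

open Polynomial

noncomputable def bb (q : ℝ) : ℕ → ℝ :=
  fun m => q ^ ((m : ℤ) + 1) * qint q (m + 1) + q ^ ((m : ℤ) - 1) * qint q m
noncomputable def ll (q : ℝ) : ℕ → ℝ := fun m => q ^ (2 * (m : ℤ) - 1) * (qint q m) ^ 2

lemma qint_eq (h1 : q < 1) (m : ℕ) : qint q m = (1 - q^m)/(1-q) := by
  have hne : q ≠ 1 := ne_of_lt h1
  rw [qint, geom_sum_eq hne]
  rw [div_eq_div_iff (by intro h; apply hne; linarith [sub_eq_zero.mp h]) (by
    intro h; apply hne; linarith [sub_eq_zero.mp h])]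
  ring

lemma qfact_succ (l : ℕ) : qfact q (l+1) = qfact q l * qint q (l+1) :=
  Finset.prod_range_succ _ _

lemma bb_zero (h0 : 0 < q) : bb q 0 = q := by
  have : qint q 1 = 1 := by simp [qint]
  simp [bb, this, qint]

lemma bb_succ (h1 : q < 1) (k : ℕ) :
    bb q (k+1) = (q^(k+2)*(1 - q^(k+2)) + q^k*(1 - q^(k+1)))/(1-q) := by
  have e1 : (((k+1:ℕ) : ℤ) + 1) = ((k+2:ℕ) : ℤ) := by push_cast; ring
  have e2 : (((k+1:ℕ) : ℤ) - 1) = ((k:ℕ) : ℤ) := by push_cast; ring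
  rw [bb]
  show q ^ (((k+1:ℕ) : ℤ) + 1) * qint q (k + 2) + q ^ (((k+1:ℕ) : ℤ) - 1) * qint q (k+1) = _
  rw [e1, e2, zpow_natCast, zpow_natCast, qint_eq h1, qint_eq h1]
  have hq1 : (1:ℝ) - q ≠ 0 := by intro h; apply ne_of_lt h1; linarith
  field_simp

lemma ll_succ (h1 : q < 1) (k : ℕ) :
    ll q (k+1) = q^(2*k+1)*(1 - q^(k+1))^2/(1-q)^2 := by
  have e1 : (2 * ((k+1:ℕ) : ℤ) - 1) = ((2*k+1:ℕ) : ℤ) := by push_cast; ring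
  rw [ll]
  show q ^ (2 * ((k+1:ℕ) : ℤ) - 1) * (qint q (k+1))^2 = _
  rw [e1, zpow_natCast, qint_eq h1]
  have hq1 : (1:ℝ) - q ≠ 0 := by intro h; apply ne_of_lt h1; linarith
  field_simp

noncomputable def cseq (q : ℝ) : ℕ → ℝ
  | 0 => 1
  | (h+1) => -(q^(h+1)/(1-q)) * cseq q h

noncomputable def rfun (q : ℝ) (m : ℕ) : ℝ := (1 - q^m + q^(m+1))/q

noncomputable def Vc (q : ℝ) : ℕ → ℕ → ℝ
  | l, 0 => qfact q l
  | l, (h+1) => qfact q l * cseq q (h+1) * (q^l - rfun q (h+1))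
      * ∏ j ∈ Finset.range h, (q^l - q^(j+1))

noncomputable def Wf (q : ℝ) (f : Polynomial ℝ) : ℝ := (Lfun q f - (1-q) * f.eval 0)/q

lemma Lfun_eq_Wf (h0 : 0 < q) (f : Polynomial ℝ) :
    Lfun q f = (1-q) * f.eval 0 + q * Wf q f := by
  rw [Wf]
  field_simp
  ring

lemma Wf_monomial (h0 : 0 < q) (h1 : q < 1) (m : ℕ) (a : ℝ) :
    Wf q (Polynomial.monomial m a) = a * qfact q m := by
  rw [Wf, Lfun_monomial h0 h1]
  have e0 : (Polynomial.monomial m a).eval 0 = a * (if m = 0 then 1 else 0) := by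
    rw [Polynomial.eval_monomial, zero_pow_eq]
  rw [e0]
  by_cases hm : m = 0
  · subst hm; field_simp; simp only [if_true]; ring
  · simp only [hm, if_false]; field_simp; ring

lemma Wf_Xpow (h0 : 0 < q) (h1 : q < 1) (m : ℕ) :
    Wf q ((X : Polynomial ℝ)^m) = qfact q m := by
  rw [X_pow_eq_monomial, Wf_monomial h0 h1, one_mul]

lemma Lfun_sub (h0 : 0 < q) (h1 : q < 1) (f g : Polynomial ℝ) :
    Lfun q (f - g) = Lfun q f - Lfun q g := by
  have e : f - g = f + Polynomial.C (-1) * g := by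
    rw [map_neg, Polynomial.C_1]; ring
  rw [e, Lfun_add h0 h1, Lfun_Cmul h0 h1]; ring

lemma Wf_sub (h0 : 0 < q) (h1 : q < 1) (f g : Polynomial ℝ) :
    Wf q (f - g) = Wf q f - Wf q g := by
  rw [Wf, Wf, Wf, Lfun_sub h0 h1, Polynomial.eval_sub]
  field_simp
  ring

lemma Wf_Cmul (h0 : 0 < q) (h1 : q < 1) (a : ℝ) (f : Polynomial ℝ) :
    Wf q (Polynomial.C a * f) = a * Wf q f := by
  rw [Wf, Wf, Lfun_Cmul h0 h1, Polynomial.eval_mul, Polynomial.eval_C]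
  field_simp

lemma V_zero (h0 : 0 < q) (h1 : q < 1) (l : ℕ) :
    Wf q ((X : Polynomial ℝ)^l * ops (bb q) (ll q) 0) = Vc q l 0 := by
  show Wf q ((X : Polynomial ℝ)^l * 1) = qfact q l
  rw [mul_one, Wf_Xpow h0 h1]

lemma V_rec (h0 : 0 < q) (h1 : q < 1) (l h : ℕ) :
    Wf q ((X : Polynomial ℝ)^l * ops (bb q) (ll q) (h+2))
      = Wf q ((X : Polynomial ℝ)^(l+1) * ops (bb q) (ll q) (h+1))
        - bb q (h+1) * Wf q ((X : Polynomial ℝ)^l * ops (bb q) (ll q) (h+1))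
        - ll q (h+1) * Wf q ((X : Polynomial ℝ)^l * ops (bb q) (ll q) h) := by
  have e : (X : Polynomial ℝ)^l * ops (bb q) (ll q) (h+2)
      = ((X : Polynomial ℝ)^(l+1) * ops (bb q) (ll q) (h+1))
        - Polynomial.C (bb q (h+1)) * ((X : Polynomial ℝ)^l * ops (bb q) (ll q) (h+1))
        - Polynomial.C (ll q (h+1)) * ((X : Polynomial ℝ)^l * ops (bb q) (ll q) h) := by
    rw [show ops (bb q) (ll q) (h+2)
        = (X - Polynomial.C (bb q (h+1))) * ops (bb q) (ll q) (h+1)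
          - Polynomial.C (ll q (h+1)) * ops (bb q) (ll q) h from rfl]
    ring
  rw [e, Wf_sub h0 h1, Wf_sub h0 h1, Wf_Cmul h0 h1, Wf_Cmul h0 h1]

lemma V_one (h0 : 0 < q) (h1 : q < 1) (l : ℕ) :
    Wf q ((X : Polynomial ℝ)^l * ops (bb q) (ll q) 1) = Vc q l 1 := by
  have e : (X : Polynomial ℝ)^l * ops (bb q) (ll q) 1
      = (X : Polynomial ℝ)^(l+1) - Polynomial.C (bb q 0) * (X : Polynomial ℝ)^l := by
    rw [show ops (bb q) (ll q) 1 = X - Polynomial.C (bb q 0) from rfl]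
    ring
  rw [e, Wf_sub h0 h1, Wf_Cmul h0 h1, Wf_Xpow h0 h1, Wf_Xpow h0 h1, bb_zero h0]
  show qfact q (l+1) - q * qfact q l
      = qfact q l * cseq q 1 * (q^l - rfun q 1) * ∏ j ∈ Finset.range 0, (q^l - q^(j+1))
  rw [Finset.prod_range_zero, qfact_succ, qint_eq h1]
  show qfact q l * ((1 - q^(l+1))/(1-q)) - q * qfact q l
      = qfact q l * (-(q^(0+1)/(1-q)) * 1) * (q^l - (1 - q^1 + q^(1+1))/q) * 1
  have hq1 : (1:ℝ) - q ≠ 0 := by intro hh; apply ne_of_lt h1; linarith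
  have hz : q ^ (l+1) = q^l * q := pow_succ q l
  rw [hz]
  field_simp
  ring

lemma prod_qz (k : ℕ) (z : ℝ) :
    ∏ j ∈ Finset.range (k+1), (q*z - q^(j+1))
      = q^(k+1) * ((z - 1) * ∏ j ∈ Finset.range k, (z - q^(j+1))) := by
  have e : ∀ j, q*z - q^(j+1) = q * (z - q^j) := by
    intro j; rw [pow_succ]; ring
  rw [Finset.prod_congr rfl (fun j _ => e j), Finset.prod_mul_distrib,
    Finset.prod_const, Finset.card_range, Finset.prod_range_succ']
  simp only [pow_zero]
  ring

lemma cseq_succ (h : ℕ) : cseq q (h+1) = -(q^(h+1)/(1-q)) * cseq q h := rfl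

lemma V_eq (h0 : 0 < q) (h1 : q < 1) :
    ∀ h l, Wf q ((X : Polynomial ℝ)^l * ops (bb q) (ll q) h) = Vc q l h := by
  have hq1 : (1:ℝ) - q ≠ 0 := by intro hh; apply ne_of_lt h1; linarith
  have hq0 : q ≠ 0 := h0.ne'
  intro h
  induction h using Nat.twoStepInduction with
  | zero => exact fun l => V_zero h0 h1 l
  | one => exact fun l => V_one h0 h1 l
  | more h ih1 ih2 =>
    intro l
    rw [V_rec h0 h1, ih2, ih2, ih1]
    cases h with
    | zero =>
      simp only [Vc, cseq, rfun, Finset.prod_range_zero, Finset.prod_range_one, mul_one]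
      rw [bb_succ h1 0, ll_succ h1 0, qfact_succ, qint_eq h1]
      field_simp
      ring
    | succ k =>
      simp only [Vc, cseq, rfun]
      have P1 : ∏ j ∈ Finset.range (k+2), (q^l - q^(j+1))
          = ((∏ j ∈ Finset.range k, (q^l - q^(j+1))) * (q^l - q^(k+1))) * (q^l - q^(k+2)) := by
        rw [Finset.prod_range_succ, Finset.prod_range_succ]
      have P2 : ∏ j ∈ Finset.range (k+1), (q^l - q^(j+1))
          = (∏ j ∈ Finset.range k, (q^l - q^(j+1))) * (q^l - q^(k+1)) :=
        Finset.prod_range_succ _ _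
      have P3 : ∏ j ∈ Finset.range (k+1), (q^(l+1) - q^(j+1))
          = q^(k+1) * ((q^l - 1) * ∏ j ∈ Finset.range k, (q^l - q^(j+1))) := by
        have e : ∀ j ∈ Finset.range (k+1), q^(l+1) - q^(j+1) = q*(q^l) - q^(j+1) := by
          intro j _; rw [pow_succ]; ring
        rw [Finset.prod_congr rfl e, prod_qz]
      rw [P1, P2, P3, bb_succ h1 (k+1), ll_succ h1 (k+1), qfact_succ, qint_eq h1]
      field_simp
      ring

lemma p0_eq (h0 : 0 < q) (h1 : q < 1) :
    ∀ h, (ops (bb q) (ll q) h).eval 0 = cseq q h * poch q h := by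
  have hq1 : (1:ℝ) - q ≠ 0 := by intro hh; apply ne_of_lt h1; linarith
  have hq0 : q ≠ 0 := h0.ne'
  intro h
  induction h using Nat.twoStepInduction with
  | zero => simp [ops, cseq, poch]
  | one =>
    show (X - Polynomial.C (bb q 0)).eval 0 = cseq q 1 * poch q 1
    rw [bb_zero h0]
    simp only [Polynomial.eval_sub, Polynomial.eval_X, Polynomial.eval_C, cseq, poch]
    rw [Finset.prod_range_one]
    field_simp
    ring
  | more h ih1 ih2 =>
    show ((X - Polynomial.C (bb q (h+1))) * ops (bb q) (ll q) (h+1)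
        - Polynomial.C (ll q (h+1)) * ops (bb q) (ll q) h).eval 0 = cseq q (h+2) * poch q (h+2)
    rw [Polynomial.eval_sub, Polynomial.eval_mul, Polynomial.eval_mul,
      Polynomial.eval_sub, Polynomial.eval_X, Polynomial.eval_C, Polynomial.eval_C,
      ih1, ih2]
    rw [bb_succ h1 h, ll_succ h1 h]
    rw [show poch q (h+2) = (poch q h * (1-q^(h+1))) * (1-q^(h+2)) from by
      rw [poch_succ, poch_succ]]
    rw [poch_succ]
    simp only [cseq]
    field_simp
    ring

lemma orth (h0 : 0 < q) (h1 : q < 1) (l n : ℕ) (hln : l < n) :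
    Lfun q ((X : Polynomial ℝ)^l * ops (bb q) (ll q) n) = 0 := by
  have hq1 : (1:ℝ) - q ≠ 0 := by intro hh; apply ne_of_lt h1; linarith
  have hq0 : q ≠ 0 := h0.ne'
  obtain ⟨m, rfl⟩ : ∃ m, n = m + 1 := ⟨n-1, by omega⟩
  rw [Lfun_eq_Wf h0, V_eq h0 h1]
  cases l with
  | zero =>
    have hev : ((X : Polynomial ℝ)^0 * ops (bb q) (ll q) (m+1)).eval 0
        = cseq q (m+1) * poch q (m+1) := by
      rw [pow_zero, one_mul, p0_eq h0 h1]
    rw [hev]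
    simp only [Vc, pow_zero]
    have hprod : ∏ j ∈ Finset.range m, ((1:ℝ) - q^(j+1)) = poch q m := rfl
    rw [hprod, poch_succ]
    have hfact0 : qfact q 0 = 1 := rfl
    rw [hfact0, rfun]
    field_simp
    ring
  | succ l' =>
    have hev : ((X : Polynomial ℝ)^(l'+1) * ops (bb q) (ll q) (m+1)).eval 0 = 0 := by
      simp [Polynomial.eval_mul, Polynomial.eval_pow]
    rw [hev, mul_zero, zero_add]
    have hvc : Vc q (l'+1) (m+1) = 0 := by
      simp only [Vc]
      have hz : ∏ j ∈ Finset.range m, (q^(l'+1) - q^(j+1)) = 0 :=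
        Finset.prod_eq_zero (Finset.mem_range.mpr (by omega : l' < m)) (sub_self _)
      rw [hz, mul_zero]
    rw [hvc, mul_zero]

lemma natDegree_ops (n : ℕ) : (ops (bb q) (ll q) n).natDegree ≤ n := by
  induction n using Nat.twoStepInduction with
  | zero => simp [show ops (bb q) (ll q) 0 = 1 from rfl]
  | one =>
    show (X - Polynomial.C (bb q 0)).natDegree ≤ 1
    rw [Polynomial.natDegree_X_sub_C]
  | more n ih1 ih2 =>
    show ((X - Polynomial.C (bb q (n+1))) * ops (bb q) (ll q) (n+1)
      - Polynomial.C (ll q (n+1)) * ops (bb q) (ll q) n).natDegree ≤ n+2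
    apply le_trans (Polynomial.natDegree_sub_le _ _)
    apply max_le
    · apply le_trans (Polynomial.natDegree_mul_le)
      rw [Polynomial.natDegree_X_sub_C]
      omega
    · apply le_trans (Polynomial.natDegree_C_mul_le _ _)
      omega

lemma orth_mul (h0 : 0 < q) (h1 : q < 1) (m n : ℕ) (hmn : m < n) :
    Lfun q (ops (bb q) (ll q) m * ops (bb q) (ll q) n) = 0 := by
  have hdeg : (ops (bb q) (ll q) m).natDegree < m + 1 :=
    Nat.lt_succ_of_le (natDegree_ops m)
  have e := (ops (bb q) (ll q) m).as_sum_range' (m+1) hdeg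
  have e2 : ops (bb q) (ll q) m * ops (bb q) (ll q) n
      = ∑ k ∈ Finset.range (m+1),
          Polynomial.C ((ops (bb q) (ll q) m).coeff k)
            * ((X : Polynomial ℝ)^k * ops (bb q) (ll q) n) := by
    conv_lhs => rw [e]
    rw [Finset.sum_mul]
    refine Finset.sum_congr rfl fun k _ => ?_
    rw [← Polynomial.C_mul_X_pow_eq_monomial, mul_assoc]
  rw [e2, Lfun_sum h0 h1]
  apply Finset.sum_eq_zero
  intro k hk
  rw [Lfun_Cmul h0 h1, orth h0 h1 k n (by
    have := Finset.mem_range.mp hk; omega), mul_zero]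

end SSP

open SS in
/-- The functional `L` annihilates `p_n` for `n ≥ 1`, and `L(p_m p_n) = 0` for `m ≠ n`,
for the polynomials with `b_n = q^{n+1}[n+1]_q + q^{n-1}[n]_q`, `λ_n = q^{2n-1}[n]_q^2`. -/
theorem stmt12 (q : ℝ) (h0 : 0 < q) (h1 : q < 1) :
    (∀ n : ℕ, 1 ≤ n →
      Lfun q (ops (fun m => q ^ ((m : ℤ) + 1) * qint q (m + 1) + q ^ ((m : ℤ) - 1) * qint q m)
                  (fun m => q ^ (2 * (m : ℤ) - 1) * (qint q m) ^ 2) n) = 0) ∧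
    (∀ m n : ℕ, m ≠ n →
      Lfun q (ops (fun m => q ^ ((m : ℤ) + 1) * qint q (m + 1) + q ^ ((m : ℤ) - 1) * qint q m)
                  (fun m => q ^ (2 * (m : ℤ) - 1) * (qint q m) ^ 2) m *
              ops (fun m => q ^ ((m : ℤ) + 1) * qint q (m + 1) + q ^ ((m : ℤ) - 1) * qint q m)
                  (fun m => q ^ (2 * (m : ℤ) - 1) * (qint q m) ^ 2) n) = 0) := by
  have hbb : (fun m : ℕ => q ^ ((m : ℤ) + 1) * qint q (m + 1) + q ^ ((m : ℤ) - 1) * qint q m)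
      = SSP.bb q := rfl
  have hll : (fun m : ℕ => q ^ (2 * (m : ℤ) - 1) * (qint q m) ^ 2) = SSP.ll q := rfl
  rw [hbb, hll]
  constructor
  · intro n hn
    have h := SSP.orth h0 h1 0 n hn
    rwa [pow_zero, one_mul] at h
  · intro m n hmn
    rcases lt_trichotomy m n with hlt | heq | hgt
    · exact SSP.orth_mul h0 h1 m n hlt
    · exact absurd heq hmn
    · rw [mul_comm]; exact SSP.orth_mul h0 h1 n m hgt
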